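/- arXiv:2402.07870 — 3 statements merged into one kernel-verified Lean document; each statement's English description precedes it below -/
import Mathlib

section
/- Let E ⊆ X × Y be measurable in a graded probability space. If E is ladder d-μ-stable (the set of μ-ladders of height d for E in Y^d has measure zero), then the transposed relation E* := {(y,x) ∈ Y × X : (x,y) ∈ E} is also ladder d-μ-stable. -/
open Set MeasureTheory
open scoped ENNReal

/-- The set of μ-ladders of height `d` for `E ⊆ U × V`: tuples `b ∈ V^d` such that for
every `i < d` the set of `u` related to exactly the `b_j` with `i ≤ j` has positive
measure. -/
def muLadSet {U V : Type*} [MeasurableSpace U] (μU : Measure U)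
    (E : Set (U × V)) (d : ℕ) : Set (Fin d → V) :=
  {b | ∀ i : Fin d, 0 < μU {u | ∀ j : Fin d, ((u, b j) ∈ E ↔ i ≤ j)}}

/-- Measure of the preimage of a measurable set under an evaluation map on a product
of probability measures. -/
lemma measurableSet_memIff {W Z : Type*} [MeasurableSpace W] [MeasurableSpace Z]
    {f : W → Z} (hf : Measurable f) {S : Set Z} (hS : MeasurableSet S) (c : Prop) :
    MeasurableSet {w | (f w ∈ S ↔ c)} := by
  by_cases hc : c
  · have : {w | (f w ∈ S ↔ c)} = f ⁻¹' S := by ext w; simp [hc]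
    rw [this]; exact hf hS
  · have : {w | (f w ∈ S ↔ c)} = f ⁻¹' Sᶜ := by ext w; simp [hc]
    rw [this]; exact hf hS.compl

lemma pi_eval_preimage_apply {ι : Type*} [Fintype ι] [DecidableEq ι] {α : ι → Type*}
    [∀ i, MeasurableSpace (α i)] (μ : ∀ i, Measure (α i))
    [∀ i, IsProbabilityMeasure (μ i)] (i : ι) {s : Set (α i)}
    (_hs : MeasurableSet s) :
    Measure.pi μ (Function.eval i ⁻¹' s) = μ i s := by
  rw [Set.eval_preimage, Measure.pi_pi]
  rw [Fintype.prod_eq_single i]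
  · simp
  · intro j hj
    simp [Function.update_of_ne hj]

/-- If `E ⊆ X × Y` is ladder `d`-μ-stable, then so is the transposed relation
`E* ⊆ Y × X`. -/
theorem ladder_muStable_symm
    {X Y : Type*} [MeasurableSpace X] [MeasurableSpace Y]
    (μX : Measure X) (μY : Measure Y)
    [IsProbabilityMeasure μX] [IsProbabilityMeasure μY]
    (E : Set (X × Y)) (hE : MeasurableSet E) (d : ℕ)
    (h : (Measure.pi fun _ : Fin d => μY) (muLadSet μX E d) = 0) :
    (Measure.pi fun _ : Fin d => μX)
      (muLadSet μY {p : Y × X | (p.2, p.1) ∈ E} d) = 0 := by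
  by_contra hB0
  set μXd := Measure.pi fun _ : Fin d => μX with hμXd
  set μYd := Measure.pi fun _ : Fin d => μY with hμYd
  -- the key correspondence set
  set D : Set ((Fin d → X) × (Fin d → Y)) :=
    {p | ∀ j m : Fin d, ((p.1 m, p.2 j) ∈ E ↔ j.rev ≤ m)} with hD
  have hDmeas : MeasurableSet D := by
    have hDeq : D = ⋂ (j : Fin d) (m : Fin d),
        {p : (Fin d → X) × (Fin d → Y) | ((p.1 m, p.2 j) ∈ E ↔ j.rev ≤ m)} := by
      ext p; simp [hD]
    rw [hDeq]
    refine MeasurableSet.iInter fun j => MeasurableSet.iInter fun m => ?_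
    exact measurableSet_memIff
      (((measurable_pi_apply m).comp measurable_fst).prodMk
        ((measurable_pi_apply j).comp measurable_snd)) hE _
  -- measurability of fibers
  have hSmeas : ∀ (a : Fin d → X) (i : Fin d),
      MeasurableSet {y : Y | ∀ m : Fin d, ((a m, y) ∈ E ↔ i ≤ m)} := by
    intro a i
    have : {y : Y | ∀ m : Fin d, ((a m, y) ∈ E ↔ i ≤ m)} =
        ⋂ m : Fin d, {y : Y | ((a m, y) ∈ E ↔ i ≤ m)} := by ext y; simp
    rw [this]
    refine MeasurableSet.iInter fun m => ?_
    exact measurableSet_memIff (measurable_const.prodMk measurable_id) hE _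
  have hTmeas : ∀ (b : Fin d → Y) (i : Fin d),
      MeasurableSet {x : X | ∀ j : Fin d, ((x, b j) ∈ E ↔ i ≤ j)} := by
    intro b i
    have : {x : X | ∀ j : Fin d, ((x, b j) ∈ E ↔ i ≤ j)} =
        ⋂ j : Fin d, {x : X | ((x, b j) ∈ E ↔ i ≤ j)} := by ext x; simp
    rw [this]
    refine MeasurableSet.iInter fun j => ?_
    exact measurableSet_memIff (measurable_id.prodMk measurable_const) hE _
  -- positive measure of D
  have hprod : 0 < (μXd.prod μYd) D := by
    rw [Measure.prod_apply hDmeas,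
      lintegral_pos_iff_support (measurable_measure_prodMk_left hDmeas)]
    refine lt_of_lt_of_le (pos_iff_ne_zero.2 hB0) (measure_mono ?_)
    intro a ha
    have hslice : Prod.mk a ⁻¹' D =
        Set.pi Set.univ fun j : Fin d =>
          {y : Y | ∀ m : Fin d, ((a m, y) ∈ E ↔ j.rev ≤ m)} := by
      ext b
      simp only [Set.mem_preimage, hD, Set.mem_setOf_eq, Set.mem_pi, Set.mem_univ,
        forall_true_left]
    simp only [Function.mem_support, hslice]
    rw [hμYd, Measure.pi_pi]
    have hpos : ∀ j : Fin d,
        0 < μY {y : Y | ∀ m : Fin d, ((a m, y) ∈ E ↔ j.rev ≤ m)} := by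
      intro j
      have := ha j.rev
      simpa [muLadSet] using this
    exact (CanonicallyOrderedAdd.prod_pos.2 fun j _ => hpos j).ne'
  -- now look at slices in the other direction
  rw [Measure.prod_apply_symm hDmeas,
    lintegral_pos_iff_support (measurable_measure_prodMk_right hDmeas)] at hprod
  have hsub : (Function.support fun b => μXd ((fun a => (a, b)) ⁻¹' D)) ⊆
      muLadSet μX E d := by
    intro b hb
    intro i
    have hbpos : 0 < μXd ((fun a => (a, b)) ⁻¹' D) :=
      pos_iff_ne_zero.2 hb
    have hsubset : ((fun a => (a, b)) ⁻¹' D) ⊆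
        Function.eval i.rev ⁻¹' {x : X | ∀ j : Fin d, ((x, b j) ∈ E ↔ i ≤ j)} := by
      intro a ha
      intro j
      have := ha j i.rev
      simpa [Fin.rev_le_rev] using this
    have := lt_of_lt_of_le hbpos (measure_mono hsubset)
    rwa [hμXd, pi_eval_preimage_apply _ _ (hTmeas b i)] at this
  exact absurd h (lt_of_lt_of_le hprod (measure_mono hsub)).ne'
end

section
/- Let E₁ ⊆ X × Y₁ and E₂ ⊆ X × Y₂ be measurable relations in a graded probability space, both μ-stable (for some d, the set of trees of height d for each has measure zero). Then the relation E₁ ∧ E₂ := {(x,(y₁,y₂)) : (x,y₁) ∈ E₁ and (x,y₂) ∈ E₂} ⊆ X × (Y₁ × Y₂) is μ-stable, and the complement ¬E₁ := (X × Y₁) \ E₁ is μ-stable. -/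
open Set MeasureTheory
open scoped ENNReal

/-- The index set `2^{<d}` of 0-1 sequences of length `< d`. -/
abbrev TreeIdx (d : ℕ) := (i : Fin d) × (Fin i.val → Bool)

/-- The set of trees of height `d` for `E ⊆ U × V`. -/
def TreeSet {U V : Type*} (E : Set (U × V)) (d : ℕ) :
    Set (((Fin d → Bool) → U) × (TreeIdx d → V)) :=
  {p | ∀ (σ : Fin d → Bool) (i : Fin d),
    (p.1 σ, p.2 ⟨i, fun j => σ ⟨j.1, j.2.trans i.2⟩⟩) ∈ E ↔ σ i = true}

/-- `E` is `d`-μ-stable: the set of trees of height `d` for `E` has measure zero. -/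
def TreeZero {U V : Type*} [MeasurableSpace U] [MeasurableSpace V]
    (μU : Measure U) (μV : Measure V) (E : Set (U × V)) (d : ℕ) : Prop :=
  ((Measure.pi fun _ : Fin d → Bool => μU).prod
    (Measure.pi fun _ : TreeIdx d => μV)) (TreeSet E d) = 0

/-- `E` is μ-stable: `d`-μ-stable for some `d`. -/
def IsMuStable {U V : Type*} [MeasurableSpace U] [MeasurableSpace V]
    (μU : Measure U) (μV : Measure V) (E : Set (U × V)) : Prop :=
  ∃ d : ℕ, TreeZero μU μV E d

/-- restriction of a leaf to a node position -/
def restr {d : ℕ} (σ : Fin d → Bool) (i : Fin d) : Fin i.val → Bool :=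
  fun j => σ ⟨j.1, j.2.trans i.2⟩

/-- Embedding of the full binary tree of height `h` into the one of height `D`. -/
structure TEmb (h D : ℕ) where
  L : (Fin h → Bool) → (Fin D → Bool)
  e : TreeIdx h → TreeIdx D
  compat₁ : ∀ (σ : Fin h → Bool) (i : Fin h),
    (e ⟨i, restr σ i⟩).2 = restr (L σ) (e ⟨i, restr σ i⟩).1
  compat₂ : ∀ (σ : Fin h → Bool) (i : Fin h),
    L σ (e ⟨i, restr σ i⟩).1 = σ i
  injL : Function.Injective L
  inje : Function.Injective e

def TEmb.trans {h₁ h₂ h₃ : ℕ} (E : TEmb h₁ h₂) (P : TEmb h₂ h₃) : TEmb h₁ h₃ where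
  L := P.L ∘ E.L
  e := P.e ∘ E.e
  compat₁ := by
    intro σ i
    show (P.e (E.e ⟨i, restr σ i⟩)).2 = restr (P.L (E.L σ)) (P.e (E.e ⟨i, restr σ i⟩)).1
    have h1 := E.compat₁ σ i
    revert h1
    generalize E.e ⟨i, restr σ i⟩ = y
    obtain ⟨I, ρ⟩ := y
    intro h1
    simp only at h1
    subst h1
    exact P.compat₁ (E.L σ) I
  compat₂ := by
    intro σ i
    show P.L (E.L σ) (P.e (E.e ⟨i, restr σ i⟩)).1 = σ i
    have h1 := E.compat₁ σ i
    have h2 := E.compat₂ σ i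
    revert h1 h2
    generalize E.e ⟨i, restr σ i⟩ = y
    obtain ⟨I, ρ⟩ := y
    intro h1 h2
    simp only at h1 h2
    subst h1
    rw [P.compat₂ (E.L σ) I]
    exact h2
  injL := P.injL.comp E.injL
  inje := P.inje.comp E.inje


lemma restr_cons_succ {D : ℕ} (b : Bool) (σ : Fin D → Bool) (i : Fin D) :
    restr (Fin.cons b σ) i.succ = Fin.cons b (restr σ i) := by
  funext j
  obtain ⟨jv, hj⟩ := j
  match jv with
  | 0 => rfl
  | (k+1) => rfl

/-- embedding of the height-`D` tree as the `b`-child subtree of the height-`D+1` tree -/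
def TEmb.child {D : ℕ} (b : Bool) : TEmb D (D + 1) where
  L σ := Fin.cons b σ
  e x := ⟨x.1.succ, Fin.cons b x.2⟩
  compat₁ := by
    intro σ i
    show (Fin.cons b (restr σ i) : Fin (i.1+1) → Bool) = restr (Fin.cons b σ) i.succ
    rw [restr_cons_succ]
  compat₂ := by
    intro σ i
    show (Fin.cons b σ : Fin (D+1) → Bool) i.succ = σ i
    exact @Fin.cons_succ D (fun _ => Bool) b σ i
  injL := fun σ σ' hh => by
    funext i
    have h2 : (Fin.cons b σ : Fin (D+1) → Bool) = Fin.cons b σ' := hh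
    have := congrFun h2 i.succ
    rwa [Fin.cons_succ, Fin.cons_succ] at this
  inje := by
    intro x x' hh
    have hii : x.1 = x'.1 := by
      have h1 : Fin.succ x.1 = Fin.succ x'.1 := congrArg (fun z : TreeIdx (D+1) => z.1) hh
      exact Fin.succ_injective _ h1
    obtain ⟨i, τ⟩ := x
    obtain ⟨i', τ'⟩ := x'
    simp only at hii
    subst hii
    have hpair : HEq (Fin.cons b τ : Fin (i.1+1) → Bool) (Fin.cons b τ' : Fin (i.1+1) → Bool) := by
      have hh' : (⟨i.succ, Fin.cons b τ⟩ : TreeIdx (D+1)) = ⟨i.succ, Fin.cons b τ'⟩ := hh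
      rw [Sigma.ext_iff] at hh'
      exact hh'.2
    have h2' : (Fin.cons b τ : Fin (i.1+1) → Bool) = Fin.cons b τ' := eq_of_heq hpair
    have hττ : τ = τ' := by
      funext j
      have := congrFun h2' j.succ
      rwa [Fin.cons_succ, Fin.cons_succ] at this
    rw [hττ]

section Combine
variable {h D : ℕ}

/-- the root node of the height `D+1` tree -/
def rootIdx (D : ℕ) : TreeIdx (D + 1) := ⟨⟨0, Nat.succ_pos D⟩, fun j => j.elim0⟩


lemma sigma_succ_inj {D : ℕ} {y y' : TreeIdx D} {b b' : Bool}
    (hh : (⟨y.1.succ, Fin.cons b y.2⟩ : TreeIdx (D+1)) = ⟨y'.1.succ, Fin.cons b' y'.2⟩) :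
    b = b' ∧ y = y' := by
  obtain ⟨I, ρ⟩ := y
  obtain ⟨I', ρ'⟩ := y'
  have h1 : I = I' := Fin.succ_injective _ (congrArg (fun z : TreeIdx (D+1) => z.1) hh)
  subst h1
  rw [Sigma.ext_iff] at hh
  have h2 : (Fin.cons b ρ : Fin (I.1+1) → Bool) = Fin.cons b' ρ' := eq_of_heq hh.2
  have hb : b = b' := congrFun h2 ⟨0, Nat.succ_pos _⟩
  have hρ : ρ = ρ' := by
    funext j
    have := congrFun h2 j.succ
    rwa [Fin.cons_succ, Fin.cons_succ] at this
  exact ⟨hb, by rw [hρ]⟩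

def TEmb.combine (A : Bool → TEmb h D) : TEmb (h + 1) (D + 1) where
  L σ := Fin.cons (σ ⟨0, Nat.succ_pos h⟩)
    ((A (σ ⟨0, Nat.succ_pos h⟩)).L (fun j => σ j.succ))
  e x :=
    match x with
    | ⟨⟨0, _⟩, _⟩ => rootIdx D
    | ⟨⟨i+1, hi⟩, τ⟩ =>
        let b := τ ⟨0, Nat.succ_pos i⟩
        let y := (A b).e ⟨⟨i, Nat.lt_of_succ_lt_succ hi⟩, fun j => τ j.succ⟩
        ⟨y.1.succ, Fin.cons b y.2⟩
  compat₁ := by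
    rintro σ ⟨iv, hi⟩
    match iv, hi with
    | 0, hi =>
      show (rootIdx D).2 = _
      funext j
      exact j.elim0
    | (i+1), hi =>
      show (Fin.cons (σ ⟨0, Nat.succ_pos h⟩)
          ((A (σ ⟨0, Nat.succ_pos h⟩)).e ⟨⟨i, Nat.lt_of_succ_lt_succ hi⟩,
            restr (fun j => σ j.succ) ⟨i, Nat.lt_of_succ_lt_succ hi⟩⟩).2 : Fin _ → Bool) =
        restr (Fin.cons (σ ⟨0, Nat.succ_pos h⟩)
            ((A (σ ⟨0, Nat.succ_pos h⟩)).L (fun j => σ j.succ)))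
          ((A (σ ⟨0, Nat.succ_pos h⟩)).e ⟨⟨i, Nat.lt_of_succ_lt_succ hi⟩,
            restr (fun j => σ j.succ) ⟨i, Nat.lt_of_succ_lt_succ hi⟩⟩).1.succ
      rw [restr_cons_succ]
      exact congrArg _ ((A (σ ⟨0, Nat.succ_pos h⟩)).compat₁ (fun j => σ j.succ)
        ⟨i, Nat.lt_of_succ_lt_succ hi⟩)
  compat₂ := by
    rintro σ ⟨iv, hi⟩
    match iv, hi with
    | 0, hi =>
      show (Fin.cons (σ ⟨0, Nat.succ_pos h⟩) _ : Fin (D+1) → Bool) ⟨0, Nat.succ_pos D⟩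
        = σ ⟨0, hi⟩
      rfl
    | (i+1), hi =>
      show (Fin.cons (σ ⟨0, Nat.succ_pos h⟩)
            ((A (σ ⟨0, Nat.succ_pos h⟩)).L (fun j => σ j.succ)) : Fin (D+1) → Bool)
          ((A (σ ⟨0, Nat.succ_pos h⟩)).e ⟨⟨i, Nat.lt_of_succ_lt_succ hi⟩,
            restr (fun j => σ j.succ) ⟨i, Nat.lt_of_succ_lt_succ hi⟩⟩).1.succ = σ ⟨i+1, hi⟩
      rw [Fin.cons_succ]
      rw [(A (σ ⟨0, Nat.succ_pos h⟩)).compat₂ (fun j => σ j.succ)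
        ⟨i, Nat.lt_of_succ_lt_succ hi⟩]
      rfl
  injL := by
    intro σ σ' hh
    simp only at hh
    have hhead : σ ⟨0, Nat.succ_pos h⟩ = σ' ⟨0, Nat.succ_pos h⟩ := by
      have := congrFun hh ⟨0, Nat.succ_pos D⟩
      exact this
    rw [hhead] at hh
    have htail : (fun j => σ j.succ) = (fun j : Fin h => σ' j.succ) := by
      apply (A (σ' ⟨0, Nat.succ_pos h⟩)).injL
      funext j
      have := congrFun hh j.succ
      rwa [Fin.cons_succ, Fin.cons_succ] at this
    funext j
    obtain ⟨jv, hj⟩ := j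
    match jv, hj with
    | 0, hj => exact hhead
    | (k+1), hj => exact congrFun htail ⟨k, Nat.lt_of_succ_lt_succ hj⟩
  inje := by
    rintro ⟨⟨iv, hi⟩, τ⟩ ⟨⟨iv', hi'⟩, τ'⟩ hh
    match iv, hi, τ, iv', hi', τ', hh with
    | 0, hi, τ, 0, hi', τ', hh =>
      congr 1
      funext j
      exact j.elim0
    | 0, hi, τ, (i'+1), hi', τ', hh =>
      exfalso
      have := congrArg (fun z : TreeIdx (D+1) => z.1.1) hh
      simp only [rootIdx] at this
      exact Nat.succ_ne_zero _ this.symm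
    | (i+1), hi, τ, 0, hi', τ', hh =>
      exfalso
      have := congrArg (fun z : TreeIdx (D+1) => z.1.1) hh
      simp only [rootIdx] at this
      exact Nat.succ_ne_zero _ this
    | (i+1), hi, τ, (i'+1), hi', τ', hh =>
      have hh' : (⟨((A (τ ⟨0, Nat.succ_pos i⟩)).e
            ⟨⟨i, Nat.lt_of_succ_lt_succ hi⟩, fun j => τ j.succ⟩).1.succ,
          Fin.cons (τ ⟨0, Nat.succ_pos i⟩) ((A (τ ⟨0, Nat.succ_pos i⟩)).e
            ⟨⟨i, Nat.lt_of_succ_lt_succ hi⟩, fun j => τ j.succ⟩).2⟩ : TreeIdx (D+1)) =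
          ⟨((A (τ' ⟨0, Nat.succ_pos i'⟩)).e
            ⟨⟨i', Nat.lt_of_succ_lt_succ hi'⟩, fun j => τ' j.succ⟩).1.succ,
          Fin.cons (τ' ⟨0, Nat.succ_pos i'⟩) ((A (τ' ⟨0, Nat.succ_pos i'⟩)).e
            ⟨⟨i', Nat.lt_of_succ_lt_succ hi'⟩, fun j => τ' j.succ⟩).2⟩ := hh
      obtain ⟨hb, hy⟩ := sigma_succ_inj hh'
      rw [← hb] at hy
      have harg := (A (τ ⟨0, Nat.succ_pos i⟩)).inje hy
      have hi2 : i = i' := by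
        have := congrArg (fun z : ((k : Fin h) × (Fin k.val → Bool)) => z.1.1) harg
        exact this
      subst hi2
      rw [Sigma.ext_iff] at harg
      have htail : (fun j : Fin i => τ j.succ) = (fun j : Fin i => τ' j.succ) :=
        eq_of_heq harg.2
      have hττ : τ = τ' := by
        funext j
        obtain ⟨jv, hj⟩ := j
        match jv, hj with
        | 0, hj => exact hb
        | (k+1), hj => exact congrFun htail ⟨k, Nat.lt_of_succ_lt_succ hj⟩
      rw [hττ]
end Combine

section MorePieces
variable {h D : ℕ}

def TEmb.pad (hle : h ≤ D) : TEmb h D where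
  L σ := fun i => if hi : i.1 < h then σ ⟨i.1, hi⟩ else false
  e x := ⟨⟨x.1.1, lt_of_lt_of_le x.1.2 hle⟩, fun j => x.2 ⟨j.1, j.2⟩⟩
  compat₁ := by
    intro σ i
    funext j
    show restr σ i ⟨j.1, j.2⟩ = _
    show σ ⟨j.1, lt_trans j.2 i.2⟩ = (if hj : (j : ℕ) < h then σ ⟨j.1, hj⟩ else false)
    rw [dif_pos (j.2.trans i.2)]
  compat₂ := by
    intro σ i
    show (fun i : Fin D => if hi : i.1 < h then σ ⟨i.1, hi⟩ else false) ⟨i.1, _⟩ = σ i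
    simp only [dif_pos i.2]
  injL := by
    intro σ σ' hh
    funext i
    have := congrFun hh ⟨i.1, lt_of_lt_of_le i.2 hle⟩
    simpa only [dif_pos i.2] using this
  inje := by
    rintro ⟨⟨iv, hi⟩, τ⟩ ⟨⟨iv', hi'⟩, τ'⟩ hh
    have h1 : iv = iv' := congrArg (fun z : TreeIdx D => z.1.1) hh
    subst h1
    rw [Sigma.ext_iff] at hh ⊢
    refine ⟨rfl, ?_⟩
    simp only at hh
    have h2 := eq_of_heq hh.2
    have hττ : τ = τ' := by
      funext j
      have := congrFun h2 ⟨j.1, j.2⟩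
      exact this
    rw [hττ]

def TEmb.leaf (σ₀ : Fin D → Bool) : TEmb 0 D where
  L _ := σ₀
  e x := x.1.elim0
  compat₁ := fun _ i => i.elim0
  compat₂ := fun _ i => i.elim0
  injL := fun a b _ => funext fun j => j.elim0
  inje := fun x _ _ => x.1.elim0

def Mono {h D : ℕ} (c : (Fin D → Bool) → Fin D → Fin 2) (k : Fin 2) (E : TEmb h D) : Prop :=
  ∀ σ i, σ i = false → c (E.L σ) (E.e ⟨i, restr σ i⟩).1 = k

def pb {h D : ℕ} (P : TEmb h D) (c : (Fin D → Bool) → Fin D → Fin 2) :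
    (Fin h → Bool) → Fin h → Fin 2 :=
  fun σ i => c (P.L σ) (P.e ⟨i, restr σ i⟩).1

lemma TEmb.e_restr (E : TEmb h D) (σ : Fin h → Bool) (i : Fin h) :
    E.e ⟨i, restr σ i⟩ = ⟨(E.e ⟨i, restr σ i⟩).1, restr (E.L σ) (E.e ⟨i, restr σ i⟩).1⟩ := by
  have h1 := E.compat₁ σ i
  revert h1
  generalize E.e ⟨i, restr σ i⟩ = y
  obtain ⟨I, ρ⟩ := y
  intro h1
  simp only at h1 ⊢
  subst h1
  rfl

lemma mono_trans {h₁ h₂ h₃ : ℕ} {E : TEmb h₁ h₂} {P : TEmb h₂ h₃}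
    {c : (Fin h₃ → Bool) → Fin h₃ → Fin 2} {k : Fin 2}
    (hE : Mono (pb P c) k E) : Mono c k (E.trans P) := by
  intro σ i hσ
  show c (P.L (E.L σ)) ((P.e (E.e ⟨i, restr σ i⟩)).1) = k
  rw [E.e_restr σ i]
  exact hE σ i hσ

lemma pb_trans {h₁ h₂ h₃ : ℕ} (E : TEmb h₁ h₂) (P : TEmb h₂ h₃)
    (c : (Fin h₃ → Bool) → Fin h₃ → Fin 2) :
    pb (E.trans P) c = pb E (pb P c) := by
  funext σ i
  show c (P.L (E.L σ)) ((P.e (E.e ⟨i, restr σ i⟩)).1) = _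
  rw [E.e_restr σ i]
  rfl

lemma mono_combine {A : Bool → TEmb h D} {c : (Fin (D+1) → Bool) → Fin (D+1) → Fin 2} {k : Fin 2}
    (h₀ : Mono (pb (TEmb.child false) c) k (A false))
    (h₁ : Mono (pb (TEmb.child true) c) k (A true))
    (hroot : ∀ τ : Fin h → Bool,
      c (Fin.cons false ((A false).L τ)) ⟨0, Nat.succ_pos D⟩ = k) :
    Mono c k (TEmb.combine A) := by
  rintro σ ⟨iv, hi⟩ hσ
  match iv, hi, hσ with
  | 0, hi, hσ =>
    show c (Fin.cons (σ ⟨0, Nat.succ_pos h⟩)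
      ((A (σ ⟨0, Nat.succ_pos h⟩)).L (fun j => σ j.succ))) ⟨0, Nat.succ_pos D⟩ = k
    have hb : σ ⟨0, Nat.succ_pos h⟩ = false := hσ
    rw [hb]
    exact hroot _
  | (i+1), hi, hσ =>
    show c (Fin.cons (σ ⟨0, Nat.succ_pos h⟩)
        ((A (σ ⟨0, Nat.succ_pos h⟩)).L (fun j => σ j.succ)))
      ((A (σ ⟨0, Nat.succ_pos h⟩)).e ⟨⟨i, Nat.lt_of_succ_lt_succ hi⟩,
        restr (fun j => σ j.succ) ⟨i, Nat.lt_of_succ_lt_succ hi⟩⟩).1.succ = k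
    have hσ' : (fun j : Fin h => σ j.succ) ⟨i, Nat.lt_of_succ_lt_succ hi⟩ = false := hσ
    cases hb : σ ⟨0, Nat.succ_pos h⟩ with
    | false => exact h₀ (fun j => σ j.succ) ⟨i, Nat.lt_of_succ_lt_succ hi⟩ hσ'
    | true => exact h₁ (fun j => σ j.succ) ⟨i, Nat.lt_of_succ_lt_succ hi⟩ hσ'

end MorePieces

theorem leafRamsey : ∀ (p q n : ℕ), p + q ≤ n → ∀ γ : (Fin n → Bool) → Fin 2,
    (∃ E : TEmb p n, ∀ σ, γ (E.L σ) = 0) ∨ (∃ E : TEmb q n, ∀ σ, γ (E.L σ) = 1) := by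
  intro p
  induction p with
  | zero =>
    intro q n hle γ
    by_cases hall : ∀ σ : Fin n → Bool, γ σ = 1
    · exact Or.inr ⟨TEmb.pad (by omega), fun σ => hall _⟩
    · push_neg at hall
      obtain ⟨σ₀, hσ₀⟩ := hall
      have h0 : γ σ₀ = 0 := by
        have : ∀ x : Fin 2, x ≠ 1 → x = 0 := by decide
        exact this _ hσ₀
      exact Or.inl ⟨TEmb.leaf σ₀, fun _ => h0⟩
  | succ p IH =>
    intro q n hle γ
    match n, hle with
    | 0, hle => exact absurd hle (by omega)
    | (m+1), hle =>
      have hle' : p + q ≤ m := by omega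
      rcases IH q m hle' (fun x => γ ((TEmb.child false).L x)) with ⟨E0, h0⟩ | ⟨E, hE⟩
      · rcases IH q m hle' (fun x => γ ((TEmb.child true).L x)) with ⟨E1, h1⟩ | ⟨E, hE⟩
        · refine Or.inl ⟨TEmb.combine (fun b => bif b then E1 else E0), fun σ => ?_⟩
          show γ (Fin.cons (σ ⟨0, Nat.succ_pos p⟩)
            (((bif σ ⟨0, Nat.succ_pos p⟩ then E1 else E0)).L (fun j => σ j.succ))) = 0
          cases hb : σ ⟨0, Nat.succ_pos p⟩ with
          | false => exact h0 (fun j => σ j.succ)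
          | true => exact h1 (fun j => σ j.succ)
        · exact Or.inr ⟨E.trans (TEmb.child true), fun σ => hE σ⟩
      · exact Or.inr ⟨E.trans (TEmb.child false), fun σ => hE σ⟩

theorem treeRamsey : ∀ (d₁ d₂ : ℕ), ∃ D : ℕ, ∀ n, D ≤ n →
    ∀ c : (Fin n → Bool) → Fin n → Fin 2,
    (∃ E : TEmb d₁ n, Mono c 0 E) ∨ (∃ E : TEmb d₂ n, Mono c 1 E) := by
  intro d₁
  induction d₁ with
  | zero =>
    intro d₂
    exact ⟨0, fun n _ c => Or.inl ⟨TEmb.leaf (fun _ => false), fun σ i => i.elim0⟩⟩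
  | succ a IHa =>
    intro d₂
    induction d₂ with
    | zero =>
      exact ⟨0, fun n _ c => Or.inr ⟨TEmb.leaf (fun _ => false), fun σ i => i.elim0⟩⟩
    | succ b IHb =>
      obtain ⟨Da, hDa⟩ := IHa (b+1)
      obtain ⟨Db, hDb⟩ := IHb
      set M := max Da Db with hM
      refine ⟨2 * M + 1, fun n hn c => ?_⟩
      match n, hn with
      | (m+1), hn =>
        have hm : M + M ≤ m := by omega
        have hMa : Da ≤ M := le_max_left _ _
        have hMb : Db ≤ M := le_max_right _ _
        -- color of each leaf of the false subtree at the root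
        rcases leafRamsey M M m hm
            (fun x => c ((TEmb.child false).L x) ⟨0, Nat.succ_pos m⟩) with
          ⟨U, hU⟩ | ⟨U, hU⟩
        · -- all chosen false-side leaves have root color 0 : try to build the `0`-tree
          rcases hDa M hMa (pb (U.trans (TEmb.child false)) c) with ⟨F₀, m₀⟩ | ⟨E₂, m₂⟩
          · rcases hDa m (le_trans hMa (by omega)) (pb (TEmb.child true) c) with
              ⟨F₁, m₁⟩ | ⟨E₂, m₂⟩
            · refine Or.inl ⟨TEmb.combine (fun s => bif s then F₁ else (F₀.trans U)), ?_⟩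
              apply mono_combine
              · rw [pb_trans] at m₀
                exact mono_trans m₀
              · exact m₁
              · intro τ
                exact hU (F₀.L τ)
            · exact Or.inr ⟨E₂.trans (TEmb.child true), mono_trans m₂⟩
          · exact Or.inr ⟨E₂.trans (U.trans (TEmb.child false)), mono_trans m₂⟩
        · -- all chosen false-side leaves have root color 1 : try to build the `1`-tree
          rcases hDb M hMb (pb (U.trans (TEmb.child false)) c) with ⟨E₁, m₁'⟩ | ⟨G₀, m₀⟩
          · exact Or.inl ⟨E₁.trans (U.trans (TEmb.child false)), mono_trans m₁'⟩
          · rcases hDb m (le_trans hMb (by omega)) (pb (TEmb.child true) c) with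
              ⟨E₁, m₁'⟩ | ⟨G₁, m₁⟩
            · exact Or.inl ⟨E₁.trans (TEmb.child true), mono_trans m₁'⟩
            · refine Or.inr ⟨TEmb.combine (fun s => bif s then G₁ else (G₀.trans U)), ?_⟩
              apply mono_combine
              · rw [pb_trans] at m₀
                exact mono_trans m₀
              · exact m₁
              · intro τ
                exact hU (G₀.L τ)

section MeasureLemmas
open MeasureTheory

lemma map_precomp_pi {α β Z : Type*} [Fintype α] [Fintype β] [MeasurableSpace Z]
    (ν : Measure Z) [IsProbabilityMeasure ν] {g : α → β} (hg : Function.Injective g) :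
    Measure.map (fun f : β → Z => f ∘ g) (Measure.pi fun _ : β => ν) =
      (Measure.pi fun _ : α => ν) := by
  classical
  refine (Measure.pi_eq fun s hs => ?_).symm
  have hmeas : Measurable (fun f : β → Z => f ∘ g) :=
    measurable_pi_lambda _ fun a => measurable_pi_apply (g a)
  rw [Measure.map_apply hmeas (MeasurableSet.univ_pi hs)]
  have hpre : ((fun f : β → Z => f ∘ g) ⁻¹' Set.univ.pi s) =
      Set.univ.pi (fun b => if h : ∃ a, g a = b then s h.choose else Set.univ) := by
    ext f
    simp only [Set.mem_preimage, Set.mem_univ_pi, Function.comp_apply]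
    constructor
    · intro hf b
      by_cases h : ∃ a, g a = b
      · rw [dif_pos h]
        have := hf h.choose
        rwa [h.choose_spec] at this
      · rw [dif_neg h]
        exact Set.mem_univ _
    · intro hf a
      have hex : ∃ a', g a' = g a := ⟨a, rfl⟩
      have := hf (g a)
      rw [dif_pos hex] at this
      rwa [hg hex.choose_spec] at this
  rw [hpre, Measure.pi_pi]
  have h1 : ∀ b ∈ Finset.univ, b ∉ Finset.univ.image g →
      ν (if h : ∃ a, g a = b then s h.choose else Set.univ) = 1 := by
    intro b _ hb
    have : ¬ ∃ a, g a = b := by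
      intro ⟨a, ha⟩
      exact hb (Finset.mem_image.mpr ⟨a, Finset.mem_univ a, ha⟩)
    rw [dif_neg this]
    exact measure_univ
  rw [← Finset.prod_subset (Finset.subset_univ (Finset.univ.image g)) h1]
  rw [Finset.prod_image (fun x _ y _ hxy => hg hxy)]
  refine Finset.prod_congr rfl fun a _ => ?_
  have hex : ∃ a', g a' = g a := ⟨a, rfl⟩
  rw [dif_pos hex, hg hex.choose_spec]

lemma map_fst_comp_pi {ι Y₁ Y₂ : Type*} [Fintype ι] [MeasurableSpace Y₁] [MeasurableSpace Y₂]
    (μ₁ : Measure Y₁) (μ₂ : Measure Y₂) [IsProbabilityMeasure μ₁] [IsProbabilityMeasure μ₂] :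
    Measure.map (fun f : ι → Y₁ × Y₂ => fun i => (f i).1)
        (Measure.pi fun _ : ι => μ₁.prod μ₂) = Measure.pi fun _ : ι => μ₁ := by
  refine (Measure.pi_eq fun s hs => ?_).symm
  have hmeas : Measurable (fun f : ι → Y₁ × Y₂ => fun i => (f i).1) :=
    measurable_pi_lambda _ fun i => measurable_fst.comp (measurable_pi_apply i)
  rw [Measure.map_apply hmeas (MeasurableSet.univ_pi hs)]
  have hpre : ((fun f : ι → Y₁ × Y₂ => fun i => (f i).1) ⁻¹' Set.univ.pi s) =
      Set.univ.pi fun i => Prod.fst ⁻¹' (s i) := by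
    ext f
    simp [Set.mem_univ_pi]
  rw [hpre, Measure.pi_pi]
  refine Finset.prod_congr rfl fun i _ => ?_
  rw [← Set.prod_univ, Measure.prod_prod, measure_univ, mul_one]

lemma measurableSet_treeSet {U V : Type*} [MeasurableSpace U] [MeasurableSpace V]
    {E : Set (U × V)} (hE : MeasurableSet E) (d : ℕ) : MeasurableSet (TreeSet E d) := by
  have heq : TreeSet E d = ⋂ (σ : Fin d → Bool), ⋂ (i : Fin d),
      {p : ((Fin d → Bool) → U) × (TreeIdx d → V) |
        (p.1 σ, p.2 ⟨i, fun j => σ ⟨j.1, j.2.trans i.2⟩⟩) ∈ E ↔ σ i = true} := by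
    ext p
    simp only [TreeSet, Set.mem_setOf_eq, Set.mem_iInter]
  rw [heq]
  refine MeasurableSet.iInter fun σ => MeasurableSet.iInter fun i => ?_
  have hm : Measurable fun p : ((Fin d → Bool) → U) × (TreeIdx d → V) =>
      (p.1 σ, p.2 ⟨i, fun j => σ ⟨j.1, j.2.trans i.2⟩⟩) :=
    ((measurable_pi_apply σ).comp measurable_fst).prodMk
      ((measurable_pi_apply _).comp measurable_snd)
  cases hσ : σ i with
  | false =>
    have heq2 : {p : ((Fin d → Bool) → U) × (TreeIdx d → V) |
        (p.1 σ, p.2 ⟨i, fun j => σ ⟨j.1, j.2.trans i.2⟩⟩) ∈ E ↔ false = true} =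
        (fun p : ((Fin d → Bool) → U) × (TreeIdx d → V) =>
          (p.1 σ, p.2 ⟨i, fun j => σ ⟨j.1, j.2.trans i.2⟩⟩)) ⁻¹' Eᶜ := by
      ext p
      simp
    rw [heq2]
    exact hm hE.compl
  | true =>
    have heq2 : {p : ((Fin d → Bool) → U) × (TreeIdx d → V) |
        (p.1 σ, p.2 ⟨i, fun j => σ ⟨j.1, j.2.trans i.2⟩⟩) ∈ E ↔ true = true} =
        (fun p : ((Fin d → Bool) → U) × (TreeIdx d → V) =>
          (p.1 σ, p.2 ⟨i, fun j => σ ⟨j.1, j.2.trans i.2⟩⟩)) ⁻¹' E := by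
      ext p
      simp
    rw [heq2]
    exact hm hE

instance {h D : ℕ} : Countable (TEmb h D) := by
  have hinj : Function.Injective (fun E : TEmb h D => (E.L, E.e)) := by
    rintro ⟨L, e, _, _, _, _⟩ ⟨L', e', _, _, _, _⟩ hh
    simp only [Prod.mk.injEq] at hh
    obtain ⟨h1, h2⟩ := hh
    subst h1
    subst h2
    rfl
  exact (Finite.of_injective _ hinj).to_countable

end MeasureLemmas

section Main
open MeasureTheory

lemma treeZero_compl {X Y : Type*} [MeasurableSpace X] [MeasurableSpace Y]
    (μX : Measure X) (μY : Measure Y) [IsProbabilityMeasure μX] [IsProbabilityMeasure μY]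
    {E : Set (X × Y)} (hE : MeasurableSet E) {d : ℕ} (hz : TreeZero μX μY E d) :
    TreeZero μX μY ((Set.univ : Set (X × Y)) \ E) d := by
  classical
  unfold TreeZero at hz ⊢
  set F : (Fin d → Bool) → (Fin d → Bool) := fun σ => fun i => !(σ i) with hF
  set G : TreeIdx d → TreeIdx d := fun x => ⟨x.1, fun j => !(x.2 j)⟩ with hG
  have Finj : Function.Injective F := by
    intro σ σ' hh
    funext i
    exact Bool.not_inj (congrFun hh i)
  have Ginj : Function.Injective G := by
    rintro ⟨i, τ⟩ ⟨i', τ'⟩ hh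
    have h1 : i = i' := congrArg (fun z : TreeIdx d => z.1) hh
    subst h1
    rw [Sigma.ext_iff] at hh ⊢
    refine ⟨rfl, ?_⟩
    have h2 := eq_of_heq hh.2
    exact heq_of_eq (funext fun j => Bool.not_inj (congrFun h2 j))
  have mp1 : MeasurePreserving (fun f : (Fin d → Bool) → X => f ∘ F)
      (Measure.pi fun _ => μX) (Measure.pi fun _ => μX) :=
    ⟨measurable_pi_lambda _ fun a => measurable_pi_apply (F a), map_precomp_pi μX Finj⟩
  have mp2 : MeasurePreserving (fun g : TreeIdx d → Y => g ∘ G)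
      (Measure.pi fun _ => μY) (Measure.pi fun _ => μY) :=
    ⟨measurable_pi_lambda _ fun a => measurable_pi_apply (G a), map_precomp_pi μY Ginj⟩
  have mpΘ := mp1.prod mp2
  have hsub : TreeSet (Set.univ \ E) d ⊆
      (Prod.map (fun f : (Fin d → Bool) → X => f ∘ F)
        (fun g : TreeIdx d → Y => g ∘ G)) ⁻¹' TreeSet E d := by
    intro p hp
    intro σ i
    have hp' := hp (F σ) i
    simp only [Set.mem_diff, Set.mem_univ, true_and] at hp'
    show (p.1 (F σ), p.2 (G ⟨i, fun j => σ ⟨j.1, j.2.trans i.2⟩⟩)) ∈ E ↔ σ i = true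
    have hnode : G ⟨i, fun j => σ ⟨j.1, j.2.trans i.2⟩⟩ =
        ⟨i, fun j => (F σ) ⟨j.1, j.2.trans i.2⟩⟩ := rfl
    rw [hnode]
    have hFi : F σ i = !(σ i) := rfl
    rw [hFi] at hp'
    cases hb : σ i with
    | false =>
      rw [hb] at hp'
      simp only [Bool.not_false] at hp'
      simpa using hp'.mpr trivial
    | true =>
      rw [hb] at hp'
      simp only [Bool.not_true] at hp'
      simp only [iff_true]
      by_contra hmem
      exact Bool.false_ne_true (hp'.mp hmem)
  refine le_antisymm ?_ zero_le
  calc ((Measure.pi fun _ : Fin d → Bool => μX).prod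
        (Measure.pi fun _ : TreeIdx d => μY)) (TreeSet (Set.univ \ E) d)
      ≤ ((Measure.pi fun _ : Fin d → Bool => μX).prod
        (Measure.pi fun _ : TreeIdx d => μY))
        ((Prod.map (fun f : (Fin d → Bool) → X => f ∘ F)
          (fun g : TreeIdx d → Y => g ∘ G)) ⁻¹' TreeSet E d) := measure_mono hsub
    _ = ((Measure.pi fun _ : Fin d → Bool => μX).prod
        (Measure.pi fun _ : TreeIdx d => μY)) (TreeSet E d) :=
        mpΘ.measure_preimage (measurableSet_treeSet hE d).nullMeasurableSet
    _ = 0 := hz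
end Main

section MainConj
open MeasureTheory

lemma treeZero_conj {X Y₁ Y₂ : Type*} [MeasurableSpace X] [MeasurableSpace Y₁]
    [MeasurableSpace Y₂]
    (μX : Measure X) (μY₁ : Measure Y₁) (μY₂ : Measure Y₂)
    [IsProbabilityMeasure μX] [IsProbabilityMeasure μY₁] [IsProbabilityMeasure μY₂]
    {E₁ : Set (X × Y₁)} {E₂ : Set (X × Y₂)} (hE₁ : MeasurableSet E₁) (hE₂ : MeasurableSet E₂)
    {d₁ d₂ D : ℕ}
    (hRam : ∀ c : (Fin D → Bool) → Fin D → Fin 2,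
      (∃ E : TEmb d₁ D, Mono c 0 E) ∨ (∃ E : TEmb d₂ D, Mono c 1 E))
    (hz₁ : TreeZero μX μY₁ E₁ d₁) (hz₂ : TreeZero μX μY₂ E₂ d₂) :
    TreeZero μX (μY₁.prod μY₂)
      {p : X × Y₁ × Y₂ | (p.1, p.2.1) ∈ E₁ ∧ (p.1, p.2.2) ∈ E₂} D := by
  classical
  unfold TreeZero at hz₁ hz₂ ⊢
  set EA := {p : X × Y₁ × Y₂ | (p.1, p.2.1) ∈ E₁ ∧ (p.1, p.2.2) ∈ E₂} with hEA
  -- the two selection maps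
  have mpX : ∀ {dd : ℕ} (P : TEmb dd D), MeasurePreserving
      (fun f : (Fin D → Bool) → X => f ∘ P.L)
      (Measure.pi fun _ => μX) (Measure.pi fun _ => μX) :=
    fun P => ⟨measurable_pi_lambda _ fun a => measurable_pi_apply (P.L a),
      map_precomp_pi μX P.injL⟩
  have mpN1 : ∀ (P : TEmb d₁ D), MeasurePreserving
      (fun g : TreeIdx D → Y₁ × Y₂ => fun t : TreeIdx d₁ => (g (P.e t)).1)
      (Measure.pi fun _ => μY₁.prod μY₂) (Measure.pi fun _ => μY₁) := by
    intro P
    have m1 : Measurable (fun g : TreeIdx D → Y₁ × Y₂ => g ∘ P.e) :=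
      measurable_pi_lambda _ fun a => measurable_pi_apply (P.e a)
    have m2 : Measurable (fun f : TreeIdx d₁ → Y₁ × Y₂ => fun t => (f t).1) :=
      measurable_pi_lambda _ fun i => measurable_fst.comp (measurable_pi_apply i)
    refine ⟨m2.comp m1, ?_⟩
    have hco : (fun g : TreeIdx D → Y₁ × Y₂ => fun t : TreeIdx d₁ => (g (P.e t)).1)
        = (fun f : TreeIdx d₁ → Y₁ × Y₂ => fun t => (f t).1)
          ∘ (fun g : TreeIdx D → Y₁ × Y₂ => g ∘ P.e) := rfl
    rw [hco, ← Measure.map_map m2 m1, map_precomp_pi _ P.inje, map_fst_comp_pi μY₁ μY₂]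
  have mpN2 : ∀ (P : TEmb d₂ D), MeasurePreserving
      (fun g : TreeIdx D → Y₁ × Y₂ => fun t : TreeIdx d₂ => (g (P.e t)).2)
      (Measure.pi fun _ => μY₁.prod μY₂) (Measure.pi fun _ => μY₂) := by
    intro P
    have m1 : Measurable (fun g : TreeIdx D → Y₁ × Y₂ => g ∘ P.e) :=
      measurable_pi_lambda _ fun a => measurable_pi_apply (P.e a)
    have m2 : Measurable (fun f : TreeIdx d₂ → Y₁ × Y₂ => fun t => (f t).2) :=
      measurable_pi_lambda _ fun i => measurable_snd.comp (measurable_pi_apply i)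
    refine ⟨m2.comp m1, ?_⟩
    have hco : (fun g : TreeIdx D → Y₁ × Y₂ => fun t : TreeIdx d₂ => (g (P.e t)).2)
        = (fun f : TreeIdx d₂ → Y₁ × Y₂ => fun t => (f t).2)
          ∘ (fun g : TreeIdx D → Y₁ × Y₂ => g ∘ P.e) := rfl
    rw [hco, ← Measure.map_map m2 m1, map_precomp_pi _ P.inje]
    -- snd version of map_fst_comp_pi
    refine (Measure.pi_eq fun s hs => ?_).symm
    rw [Measure.map_apply m2 (MeasurableSet.univ_pi hs)]
    have hpre : ((fun f : TreeIdx d₂ → Y₁ × Y₂ => fun t => (f t).2) ⁻¹' Set.univ.pi s) =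
        Set.univ.pi fun i => Prod.snd ⁻¹' (s i) := by
      ext f
      simp [Set.mem_univ_pi]
    rw [hpre, Measure.pi_pi]
    refine Finset.prod_congr rfl fun i _ => ?_
    rw [← Set.univ_prod, Measure.prod_prod, measure_univ, one_mul]
  have hsub : TreeSet EA D ⊆
      (⋃ P : TEmb d₁ D, (Prod.map (fun f : (Fin D → Bool) → X => f ∘ P.L)
          (fun g : TreeIdx D → Y₁ × Y₂ => fun t : TreeIdx d₁ => (g (P.e t)).1))
            ⁻¹' TreeSet E₁ d₁) ∪
      (⋃ P : TEmb d₂ D, (Prod.map (fun f : (Fin D → Bool) → X => f ∘ P.L)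
          (fun g : TreeIdx D → Y₁ × Y₂ => fun t : TreeIdx d₂ => (g (P.e t)).2))
            ⁻¹' TreeSet E₂ d₂) := by
    intro p hp
    set c : (Fin D → Bool) → Fin D → Fin 2 := fun σ i =>
      if (p.1 σ, (p.2 ⟨i, fun j => σ ⟨j.1, j.2.trans i.2⟩⟩).1) ∈ E₁ then 1 else 0 with hc
    rcases hRam c with ⟨P, hMono⟩ | ⟨P, hMono⟩
    · left
      refine Set.mem_iUnion.mpr ⟨P, ?_⟩
      intro σ i
      show (p.1 (P.L σ), (p.2 (P.e ⟨i, restr σ i⟩)).1) ∈ E₁ ↔ σ i = true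
      rw [P.e_restr σ i]
      have hbig := hp (P.L σ) (P.e ⟨i, restr σ i⟩).1
      have hbit := P.compat₂ σ i
      cases hb : σ i with
      | true =>
        refine iff_of_true ?_ rfl
        have hmemEA : (p.1 (P.L σ), p.2 ⟨(P.e ⟨i, restr σ i⟩).1,
            fun j => (P.L σ) ⟨j.1, j.2.trans (P.e ⟨i, restr σ i⟩).1.2⟩⟩) ∈ EA :=
          hbig.mpr (by rw [hbit, hb])
        exact hmemEA.1
      | false =>
        refine iff_of_false ?_ (by simp)
        have hcol := hMono σ i hb
        intro hmem
        rw [hc] at hcol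
        simp only at hcol
        have hmem' : (p.1 (P.L σ), (p.2 ⟨(P.e ⟨i, restr σ i⟩).1,
            fun j => (P.L σ) ⟨j.1, j.2.trans (P.e ⟨i, restr σ i⟩).1.2⟩⟩).1) ∈ E₁ := hmem
        rw [if_pos hmem'] at hcol
        exact absurd hcol (by decide)
    · right
      refine Set.mem_iUnion.mpr ⟨P, ?_⟩
      intro σ i
      show (p.1 (P.L σ), (p.2 (P.e ⟨i, restr σ i⟩)).2) ∈ E₂ ↔ σ i = true
      rw [P.e_restr σ i]
      have hbig := hp (P.L σ) (P.e ⟨i, restr σ i⟩).1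
      have hbit := P.compat₂ σ i
      cases hb : σ i with
      | true =>
        refine iff_of_true ?_ rfl
        have hmemEA : (p.1 (P.L σ), p.2 ⟨(P.e ⟨i, restr σ i⟩).1,
            fun j => (P.L σ) ⟨j.1, j.2.trans (P.e ⟨i, restr σ i⟩).1.2⟩⟩) ∈ EA :=
          hbig.mpr (by rw [hbit, hb])
        exact hmemEA.2
      | false =>
        refine iff_of_false ?_ (by simp)
        have hcol := hMono σ i hb
        rw [hc] at hcol
        simp only at hcol
        have hmem1 : (p.1 (P.L σ), (p.2 ⟨(P.e ⟨i, restr σ i⟩).1,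
            fun j => (P.L σ) ⟨j.1, j.2.trans (P.e ⟨i, restr σ i⟩).1.2⟩⟩).1) ∈ E₁ := by
          by_contra hmem
          rw [if_neg hmem] at hcol
          exact absurd hcol (by decide)
        have hnEA : ¬ (p.1 (P.L σ), p.2 ⟨(P.e ⟨i, restr σ i⟩).1,
            fun j => (P.L σ) ⟨j.1, j.2.trans (P.e ⟨i, restr σ i⟩).1.2⟩⟩) ∈ EA := by
          intro hm
          have := hbig.mp hm
          rw [hbit, hb] at this
          exact Bool.false_ne_true this
        intro hmem2
        exact hnEA ⟨hmem1, hmem2⟩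
  refine le_antisymm ?_ zero_le
  calc ((Measure.pi fun _ : Fin D → Bool => μX).prod
        (Measure.pi fun _ : TreeIdx D => μY₁.prod μY₂)) (TreeSet EA D)
      ≤ _ := measure_mono hsub
    _ = 0 := by
        apply measure_union_null
        · apply measure_iUnion_null
          intro P
          rw [((mpX P).prod (mpN1 P)).measure_preimage
            (measurableSet_treeSet hE₁ d₁).nullMeasurableSet]
          exact hz₁
        · apply measure_iUnion_null
          intro P
          rw [((mpX P).prod (mpN2 P)).measure_preimage
            (measurableSet_treeSet hE₂ d₂).nullMeasurableSet]
          exact hz₂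
end MainConj

/-- μ-stability is preserved under conjunction and negation. -/
theorem isMuStable_and_and_not
    {X Y₁ Y₂ : Type*} [MeasurableSpace X] [MeasurableSpace Y₁] [MeasurableSpace Y₂]
    (μX : Measure X) (μY₁ : Measure Y₁) (μY₂ : Measure Y₂)
    [IsProbabilityMeasure μX] [IsProbabilityMeasure μY₁] [IsProbabilityMeasure μY₂]
    (E₁ : Set (X × Y₁)) (E₂ : Set (X × Y₂))
    (hE₁ : MeasurableSet E₁) (hE₂ : MeasurableSet E₂)
    (h₁ : IsMuStable μX μY₁ E₁) (h₂ : IsMuStable μX μY₂ E₂) :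
    IsMuStable μX (μY₁.prod μY₂)
        {p : X × Y₁ × Y₂ | (p.1, p.2.1) ∈ E₁ ∧ (p.1, p.2.2) ∈ E₂} ∧
      IsMuStable μX μY₁ ((univ : Set (X × Y₁)) \ E₁) := by
  obtain ⟨d₁, hz₁⟩ := h₁
  obtain ⟨d₂, hz₂⟩ := h₂
  obtain ⟨D, hD⟩ := treeRamsey d₁ d₂
  constructor
  · exact ⟨D, treeZero_conj μX μY₁ μY₂ hE₁ hE₂ (hD D le_rfl) hz₁ hz₂⟩
  · exact ⟨d₁, treeZero_compl μX μY₁ hE₁ hz₁⟩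
end

section
/- Let E ⊆ X × Y × Z be measurable in a graded probability space. Suppose X₀ ⊆ X is measurable and perfect for E viewed as a binary relation on X × (Y × Z), and Y₀ ⊆ Y is measurable and perfect for E viewed as a binary relation on Y × (X × Z), both of positive measure. Then X₀ × Y₀ is perfect for E viewed as a binary relation on (X × Y) × Z. -/
open Set MeasureTheory
open scoped ENNReal

/-- `A` is perfect for `R ⊆ U × V`: the set of `v` whose fiber μ-splits `A` has measure
zero. -/
def PerfectFor {U V : Type*} [MeasurableSpace U] [MeasurableSpace V]
    (μU : Measure U) (μV : Measure V) (R : Set (U × V)) (A : Set U) : Prop :=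
  μV {v | 0 < μU (A ∩ {u | (u, v) ∈ R}) ∧ 0 < μU (A \ {u | (u, v) ∈ R})} = 0

/-- 0-1 density lemma for a pair of perfect sets: if for a.e. `y` the `x`-fiber of `W`
does not split `X₀`, for a.e. `x` the `y`-fiber of `W` does not split `Y₀`, and
`X₀ ×ˢ Y₀ ∩ W` has positive measure, then `X₀ ×ˢ Y₀ \ W` is null. -/
lemma key_zero_one {X Y : Type*} [MeasurableSpace X] [MeasurableSpace Y]
    (μX : Measure X) (μY : Measure Y)
    [IsProbabilityMeasure μX] [IsProbabilityMeasure μY]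
    (W : Set (X × Y)) (hW : MeasurableSet W)
    (X₀ : Set X) (Y₀ : Set Y) (hX₀ : MeasurableSet X₀) (hY₀ : MeasurableSet Y₀)
    (h1 : ∀ᵐ y ∂μY, μX (X₀ ∩ {x | (x, y) ∈ W}) = 0 ∨ μX (X₀ \ {x | (x, y) ∈ W}) = 0)
    (h2 : ∀ᵐ x ∂μX, μY (Y₀ ∩ {y | (x, y) ∈ W}) = 0 ∨ μY (Y₀ \ {y | (x, y) ∈ W}) = 0)
    (hpos : 0 < (μX.prod μY) (X₀ ×ˢ Y₀ ∩ W)) :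
    (μX.prod μY) (X₀ ×ˢ Y₀ \ W) = 0 := by
  have hT : MeasurableSet (X₀ ×ˢ Y₀ ∩ W) := (hX₀.prod hY₀).inter hW
  -- the fiberwise measure function
  set f : X → ℝ≥0∞ := fun x => μY (Prod.mk x ⁻¹' (X₀ ×ˢ Y₀ ∩ W)) with hf_def
  have hf : Measurable f := measurable_measure_prodMk_left hT
  have hsec : ∀ x, Prod.mk x ⁻¹' (X₀ ×ˢ Y₀ ∩ W)
      = {y | x ∈ X₀ ∧ y ∈ Y₀ ∧ (x, y) ∈ W} := by
    intro x; ext y; simp [Set.mem_prod, and_assoc]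
  have hWx : ∀ x : X, MeasurableSet {y | (x, y) ∈ W} :=
    fun x => hW.preimage measurable_prodMk_left
  have hWy : ∀ y : Y, MeasurableSet {x | (x, y) ∈ W} :=
    fun y => hW.preimage (measurable_id.prodMk measurable_const)
  -- f x = μY (Y₀ ∩ W_x) for x ∈ X₀, and 0 otherwise
  have hfX₀ : ∀ x ∈ X₀, f x = μY (Y₀ ∩ {y | (x, y) ∈ W}) := by
    intro x hx
    simp only [hf_def, hsec]
    congr 1
    ext y; simp [hx, Set.mem_inter_iff]
  have hfX₀c : ∀ x ∉ X₀, f x = 0 := by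
    intro x hx
    simp only [hf_def, hsec]
    have he : {y | x ∈ X₀ ∧ y ∈ Y₀ ∧ (x, y) ∈ W} = (∅ : Set Y) := by
      ext y; simp [hx]
    rw [he]; exact measure_empty
  -- the set of x where the fiber meets X₀ × Y₀ ∩ W substantially
  set S : Set X := {x | 0 < f x} with hS_def
  have hSm : MeasurableSet S := measurableSet_lt measurable_const hf
  have hSsub : S ⊆ X₀ := by
    intro x hx
    by_contra hxn
    rw [hS_def, mem_setOf_eq, hfX₀c x hxn] at hx
    exact lt_irrefl 0 hx
  have hSpos : 0 < μX S := by
    by_contra h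
    push_neg at h
    have hS0 : μX S = 0 := le_antisymm h zero_le
    have : ∫⁻ x, f x ∂μX = 0 := by
      rw [lintegral_eq_zero_iff hf]
      have : {x | f x ≠ 0} ⊆ S := by
        intro x hx
        exact pos_iff_ne_zero.mpr hx
      exact measure_mono_null this hS0
    rw [Measure.prod_apply hT] at hpos
    rw [this] at hpos
    exact lt_irrefl 0 hpos
  -- for a.e. x ∈ S, Y₀ is a.e. contained in the fiber
  have hfull : ∀ᵐ x ∂μX, x ∈ S → μY (Y₀ ∩ {y | (x, y) ∈ W}) = μY Y₀ := by
    filter_upwards [h2] with x hx hxS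
    have hxX₀ : x ∈ X₀ := hSsub hxS
    have hpos' : 0 < μY (Y₀ ∩ {y | (x, y) ∈ W}) := by
      rw [← hfX₀ x hxX₀]; exact hxS
    rcases hx with h | h
    · rw [h] at hpos'; exact absurd hpos' (lt_irrefl 0)
    · have := measure_inter_add_diff (μ := μY) Y₀ (hWx x)
      rw [h, add_zero] at this
      exact this
  -- compute the measure of U := S ×ˢ Y₀ ∩ W in two ways
  set U : Set (X × Y) := S ×ˢ Y₀ ∩ W with hU_def
  have hUm : MeasurableSet U := (hSm.prod hY₀).inter hW
  have hUsec : ∀ x, Prod.mk x ⁻¹' U = {y | x ∈ S ∧ y ∈ Y₀ ∧ (x, y) ∈ W} := by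
    intro x; ext y; simp [hU_def, Set.mem_prod, and_assoc]
  have hU1 : (μX.prod μY) U = μY Y₀ * μX S := by
    rw [Measure.prod_apply hUm]
    have : ∀ᵐ x ∂μX, μY (Prod.mk x ⁻¹' U) = S.indicator (fun _ => μY Y₀) x := by
      filter_upwards [hfull] with x hx
      by_cases hxS : x ∈ S
      · rw [Set.indicator_of_mem hxS, hUsec]
        rw [← hx hxS]
        congr 1
        ext y; simp [hxS, Set.mem_inter_iff]
      · rw [Set.indicator_of_notMem hxS, hUsec]
        have he : {y | x ∈ S ∧ y ∈ Y₀ ∧ (x, y) ∈ W} = (∅ : Set Y) := by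
          ext y; simp [hxS]
        rw [he]; exact measure_empty
    rw [lintegral_congr_ae this, lintegral_indicator hSm]
    simp [Measure.restrict_apply MeasurableSet.univ]
  -- the other way: integrate over y
  set g : Y → ℝ≥0∞ := fun y => μX ((fun x => (x, y)) ⁻¹' U) with hg_def
  have hg : Measurable g := measurable_measure_prodMk_right hUm
  have hgsec : ∀ y, (fun x => (x, y)) ⁻¹' U = {x | x ∈ S ∧ y ∈ Y₀ ∧ (x, y) ∈ W} := by
    intro y; ext x; simp only [hU_def, Set.mem_preimage, Set.mem_inter_iff, Set.mem_prod, mem_setOf_eq]; tauto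
  have hgle : ∀ y, g y ≤ Y₀.indicator (fun _ => μX S) y := by
    intro y
    by_cases hy : y ∈ Y₀
    · rw [Set.indicator_of_mem hy]
      exact measure_mono (by rw [hgsec]; intro x hx; exact hx.1)
    · rw [Set.indicator_of_notMem hy]
      have : (fun x => (x, y)) ⁻¹' U = ∅ := by
        rw [hgsec]; ext x; simp [hy]
      rw [hg_def]; simp only [this, measure_empty]; exact le_refl 0
  have hU2 : ∫⁻ y, g y ∂μY = μY Y₀ * μX S := by
    rw [← Measure.prod_apply_symm hUm, hU1]
  have hind : ∫⁻ y, Y₀.indicator (fun _ => μX S) y ∂μY = μY Y₀ * μX S := by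
    rw [lintegral_indicator hY₀]
    simp [mul_comm]
  -- forcing: g = μX S a.e. on Y₀
  have hgfin : ∫⁻ y, g y ∂μY ≠ ⊤ := by
    rw [hU2]
    exact ENNReal.mul_ne_top (measure_ne_top _ _) (measure_ne_top _ _)
  have hsub : ∫⁻ y, (Y₀.indicator (fun _ => μX S) y - g y) ∂μY = 0 := by
    rw [lintegral_sub hg hgfin (Filter.Eventually.of_forall hgle), hind, hU2, tsub_self]
  have hforce : ∀ᵐ y ∂μY, Y₀.indicator (fun _ => μX S) y - g y = 0 := by
    have := (lintegral_eq_zero_iff ((measurable_const.indicator hY₀).sub hg)).mp hsub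
    filter_upwards [this] with y hy
    exact hy
  have hgeq : ∀ᵐ y ∂μY, y ∈ Y₀ → g y = μX S := by
    filter_upwards [hforce] with y hy hyY₀
    rw [Set.indicator_of_mem hyY₀] at hy
    have h1' : μX S ≤ g y := by
      rwa [tsub_eq_zero_iff_le] at hy
    exact le_antisymm (le_trans (hgle y) (by rw [Set.indicator_of_mem hyY₀])) h1'
  -- conclusion: a.e. y ∈ Y₀, the fiber a.e. contains X₀
  have hconc : ∀ᵐ y ∂μY, y ∈ Y₀ → μX (X₀ \ {x | (x, y) ∈ W}) = 0 := by
    filter_upwards [h1, hgeq] with y hy1 hyg hyY₀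
    have hgpos : 0 < g y := by rw [hyg hyY₀]; exact hSpos
    have hle : g y ≤ μX (X₀ ∩ {x | (x, y) ∈ W}) := by
      apply measure_mono
      rw [hgsec]
      intro x hx
      exact ⟨hSsub hx.1, hx.2.2⟩
    rcases hy1 with h | h
    · rw [h] at hle
      exact absurd (lt_of_lt_of_le hgpos hle) (lt_irrefl 0)
    · exact h
  -- finish
  have hDm : MeasurableSet (X₀ ×ˢ Y₀ \ W) := (hX₀.prod hY₀).diff hW
  rw [Measure.prod_apply_symm hDm]
  have hDsec : ∀ y, (fun x => (x, y)) ⁻¹' (X₀ ×ˢ Y₀ \ W)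
      = {x | x ∈ X₀ ∧ y ∈ Y₀ ∧ (x, y) ∉ W} := by
    intro y; ext x; simp only [Set.mem_preimage, Set.mem_diff, Set.mem_prod, mem_setOf_eq]; tauto
  have : ∀ᵐ y ∂μY, μX ((fun x => (x, y)) ⁻¹' (X₀ ×ˢ Y₀ \ W)) = 0 := by
    filter_upwards [hconc] with y hy
    by_cases hyY₀ : y ∈ Y₀
    · apply measure_mono_null _ (hy hyY₀)
      rw [hDsec]
      intro x hx
      exact ⟨hx.1, hx.2.2⟩
    · apply measure_mono_null _ (measure_empty (μ := μX))
      rw [hDsec]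
      intro x hx
      exact absurd hx.2.1 hyY₀
  rw [lintegral_congr_ae this]
  simp

/-- Measurability of the set of fibers splitting a given set. -/
lemma splitMeas {U V : Type*} [MeasurableSpace U] [MeasurableSpace V]
    (μU : Measure U) [SFinite μU] (R : Set (U × V)) (hR : MeasurableSet R)
    (A : Set U) (hA : MeasurableSet A) :
    MeasurableSet {v | 0 < μU (A ∩ {u | (u, v) ∈ R}) ∧ 0 < μU (A \ {u | (u, v) ∈ R})} := by
  have h₁ : MeasurableSet ((A ×ˢ (univ : Set V)) ∩ R) := (hA.prod MeasurableSet.univ).inter hR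
  have h₂ : MeasurableSet ((A ×ˢ (univ : Set V)) \ R) := (hA.prod MeasurableSet.univ).diff hR
  have e₁ : ∀ v, (fun u => (u, v)) ⁻¹' ((A ×ˢ (univ : Set V)) ∩ R) = A ∩ {u | (u, v) ∈ R} := by
    intro v; ext u; simp [Set.mem_prod]
  have e₂ : ∀ v, (fun u => (u, v)) ⁻¹' ((A ×ˢ (univ : Set V)) \ R) = A \ {u | (u, v) ∈ R} := by
    intro v; ext u; simp [Set.mem_prod]
  have m₁ : Measurable fun v => μU (A ∩ {u | (u, v) ∈ R}) := by
    simpa only [e₁] using measurable_measure_prodMk_right (μ := μU) h₁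
  have m₂ : Measurable fun v => μU (A \ {u | (u, v) ∈ R}) := by
    simpa only [e₂] using measurable_measure_prodMk_right (μ := μU) h₂
  exact (m₁ measurableSet_Ioi).inter (m₂ measurableSet_Ioi)

/-- Products of perfect sets are perfect: if `X₀` is perfect for `E` on `X × (Y × Z)` and
`Y₀` is perfect for `E` on `Y × (X × Z)`, then `X₀ × Y₀` is perfect for `E` on
`(X × Y) × Z`. -/
theorem product_of_perfect_is_perfect
    {X Y Z : Type*} [MeasurableSpace X] [MeasurableSpace Y] [MeasurableSpace Z]
    (μX : Measure X) (μY : Measure Y) (μZ : Measure Z)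
    [IsProbabilityMeasure μX] [IsProbabilityMeasure μY] [IsProbabilityMeasure μZ]
    (E : Set (X × Y × Z)) (hE : MeasurableSet E)
    (X₀ : Set X) (Y₀ : Set Y) (hX₀ : MeasurableSet X₀) (hY₀ : MeasurableSet Y₀)
    (hX₀0 : 0 < μX X₀) (hY₀0 : 0 < μY Y₀)
    (hXperf : PerfectFor μX (μY.prod μZ) E X₀)
    (hYperf : PerfectFor μY (μX.prod μZ) {p : Y × X × Z | (p.2.1, p.1, p.2.2) ∈ E} Y₀) :
    PerfectFor (μX.prod μY) μZ
      {p : (X × Y) × Z | (p.1.1, p.1.2, p.2) ∈ E} (X₀ ×ˢ Y₀) := by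
  -- measurability of the split sets
  have hE' : MeasurableSet {p : Y × X × Z | (p.2.1, p.1, p.2.2) ∈ E} :=
    hE.preimage ((measurable_fst.comp measurable_snd).prodMk
      (measurable_fst.prodMk (measurable_snd.comp measurable_snd)))
  -- transfer hXperf to an a.e. statement in z then y
  have hXm := splitMeas μX E hE X₀ hX₀
  have hYm := splitMeas μY {p : Y × X × Z | (p.2.1, p.1, p.2.2) ∈ E} hE' Y₀ hY₀
  have h1z : ∀ᵐ z ∂μZ, ∀ᵐ y ∂μY,
      μX (X₀ ∩ {x | (x, y, z) ∈ E}) = 0 ∨ μX (X₀ \ {x | (x, y, z) ∈ E}) = 0 := by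
    have h0 : ∫⁻ z, μY ((fun y => (y, z)) ⁻¹'
        {v | 0 < μX (X₀ ∩ {x | (x, v) ∈ E}) ∧ 0 < μX (X₀ \ {x | (x, v) ∈ E})}) ∂μZ = 0 := by
      rw [← Measure.prod_apply_symm hXm]
      exact hXperf
    have h0' := (lintegral_eq_zero_iff (measurable_measure_prodMk_right hXm)).mp h0
    filter_upwards [h0'] with z hz
    rw [ae_iff]
    apply measure_mono_null _ hz
    intro y hy
    simp only [mem_setOf_eq, not_or] at hy
    simp only [Set.mem_preimage, mem_setOf_eq]
    exact ⟨pos_iff_ne_zero.mpr hy.1, pos_iff_ne_zero.mpr hy.2⟩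
  have h2z : ∀ᵐ z ∂μZ, ∀ᵐ x ∂μX,
      μY (Y₀ ∩ {y | (x, y, z) ∈ E}) = 0 ∨ μY (Y₀ \ {y | (x, y, z) ∈ E}) = 0 := by
    have h0 : ∫⁻ z, μX ((fun x => (x, z)) ⁻¹'
        {v | 0 < μY (Y₀ ∩ {y | (y, v) ∈ {p : Y × X × Z | (p.2.1, p.1, p.2.2) ∈ E}})
          ∧ 0 < μY (Y₀ \ {y | (y, v) ∈ {p : Y × X × Z | (p.2.1, p.1, p.2.2) ∈ E}})}) ∂μZ
        = 0 := by
      rw [← Measure.prod_apply_symm hYm]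
      exact hYperf
    have h0' := (lintegral_eq_zero_iff (measurable_measure_prodMk_right hYm)).mp h0
    filter_upwards [h0'] with z hz
    rw [ae_iff]
    apply measure_mono_null _ hz
    intro x hx
    simp only [mem_setOf_eq, not_or] at hx
    simp only [Set.mem_preimage, mem_setOf_eq]
    exact ⟨pos_iff_ne_zero.mpr hx.1, pos_iff_ne_zero.mpr hx.2⟩
  -- apply the 0-1 density lemma at a.e. z
  have key : ∀ᵐ z ∂μZ,
      ¬ (0 < (μX.prod μY) (X₀ ×ˢ Y₀ ∩ {p : X × Y | (p.1, p.2, z) ∈ E})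
        ∧ 0 < (μX.prod μY) (X₀ ×ˢ Y₀ \ {p : X × Y | (p.1, p.2, z) ∈ E})) := by
    filter_upwards [h1z, h2z] with z hz1 hz2
    rintro ⟨hp, hq⟩
    have hWm : MeasurableSet {p : X × Y | (p.1, p.2, z) ∈ E} :=
      hE.preimage (measurable_fst.prodMk (measurable_snd.prodMk measurable_const))
    have := key_zero_one μX μY {p : X × Y | (p.1, p.2, z) ∈ E} hWm X₀ Y₀ hX₀ hY₀
      hz1 hz2 hp
    rw [this] at hq
    exact lt_irrefl 0 hq
  unfold PerfectFor
  have heq : {z | 0 < (μX.prod μY) (X₀ ×ˢ Y₀ ∩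
        {u : X × Y | (u, z) ∈ {p : (X × Y) × Z | (p.1.1, p.1.2, p.2) ∈ E}})
      ∧ 0 < (μX.prod μY) (X₀ ×ˢ Y₀ \
        {u : X × Y | (u, z) ∈ {p : (X × Y) × Z | (p.1.1, p.1.2, p.2) ∈ E}})}
      = {z | ¬ ¬ (0 < (μX.prod μY) (X₀ ×ˢ Y₀ ∩ {p : X × Y | (p.1, p.2, z) ∈ E})
        ∧ 0 < (μX.prod μY) (X₀ ×ˢ Y₀ \ {p : X × Y | (p.1, p.2, z) ∈ E}))} := by
    ext z; simp only [mem_setOf_eq, not_not]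
  rw [heq]
  exact ae_iff.mp key
end
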